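/- Let 𝒳 ⊆ ℝ^p be nonempty compact, f : ℝ^p → ℝ^n be L-Lipschitz on 𝒳 with L > 0, and 𝒴 = f(𝒳); assume ∂𝒴 ⊆ f(∂𝒳). Let ε > 0 and suppose ∂𝒳 can be covered by N closed balls of radius ε/(2L) centered at points of ∂𝒳. Let x_1, …, x_M be i.i.d. random variables with common law P_𝒳 satisfying P_𝒳(𝒳) = 1 and P_𝒳(closedBall(x, ε/(2L))) ≥ Λ for all x ∈ ∂𝒳, for some Λ > 0. Then, with probability at least 1 − N·(1 − Λ)^M, the boundary of the reachable set is covered by the ε-balls around the output samples: ∂𝒴 ⊆ ⋃_{i=1}^M closedBall(f(x_i), ε). -/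

import Mathlib

open MeasureTheory ProbabilityTheory Metric

/-- **Probabilistic boundary coverage of the reachable set.**
With probability at least `1 − N·(1 − Λ)^M`, the boundary of the reachable set `f '' 𝒳`
is covered by the closed `ε`-balls around the output samples `f (x_i)`. -/
theorem randup_boundary_coverage {p n M N : ℕ}
    (𝒳 : Set (EuclideanSpace ℝ (Fin p))) (h𝒳ne : 𝒳.Nonempty) (h𝒳c : IsCompact 𝒳)
    (f : EuclideanSpace ℝ (Fin p) → EuclideanSpace ℝ (Fin n))
    (L : ℝ) (hL : 0 < L)
    (hf : ∀ x₁ ∈ 𝒳, ∀ x₂ ∈ 𝒳, ‖f x₁ - f x₂‖ ≤ L * ‖x₁ - x₂‖)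
    (hbd : frontier (f '' 𝒳) ⊆ f '' frontier 𝒳)
    (ε : ℝ) (hε : 0 < ε)
    (a : Fin N → EuclideanSpace ℝ (Fin p)) (ha : ∀ i, a i ∈ frontier 𝒳)
    (hcov : frontier 𝒳 ⊆ ⋃ i, Metric.closedBall (a i) (ε / (2 * L)))
    {Ω : Type*} [MeasureSpace Ω] [IsProbabilityMeasure (ℙ : Measure Ω)]
    (x : Fin M → Ω → EuclideanSpace ℝ (Fin p)) (hxmeas : ∀ i, Measurable (x i))
    (P𝒳 : Measure (EuclideanSpace ℝ (Fin p))) [IsProbabilityMeasure P𝒳]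
    (hlaw : ∀ i, Measure.map (x i) ℙ = P𝒳)
    (hindep : iIndepFun x ℙ)
    (hsupp : P𝒳 𝒳 = 1)
    (Λ : ℝ) (hΛ : 0 < Λ)
    (hball : ∀ x' ∈ frontier 𝒳, ENNReal.ofReal Λ ≤ P𝒳 (Metric.closedBall x' (ε / (2 * L)))) :
    ENNReal.ofReal (1 - N * (1 - Λ) ^ M) ≤
      ℙ {ω | frontier (f '' 𝒳) ⊆ ⋃ i, Metric.closedBall (f (x i ω)) ε} := by
  set r : ℝ := ε / (2 * L) with hr
  have h𝒳closed : IsClosed 𝒳 := h𝒳c.isClosed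
  have hfr𝒳 : frontier 𝒳 ⊆ 𝒳 := by
    exact h𝒳closed.frontier_subset
  -- Case N = 0 : the frontier is empty, target event is everything
  rcases Nat.eq_zero_or_pos N with hN | hN
  · subst hN
    have hfr : frontier 𝒳 ⊆ (∅ : Set _) := by
      intro y hy
      simpa using hcov hy
    have htarget : {ω : Ω | frontier (f '' 𝒳) ⊆ ⋃ i, Metric.closedBall (f (x i ω)) ε}
        = Set.univ := by
      ext ω
      simp only [Set.mem_setOf_eq, Set.mem_univ, iff_true]
      intro y hy
      exact absurd (hbd hy) (by simp [Set.subset_empty_iff.mp hfr])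
    rw [htarget, measure_univ]
    simp only [Nat.cast_zero, zero_mul, sub_zero]
    simp
  -- Main case : N ≥ 1, hence frontier 𝒳 is nonempty and Λ ≤ 1
  have hΛ1 : Λ ≤ 1 := by
    have h1 := hball (a ⟨0, hN⟩) (ha _)
    have h2 : P𝒳 (Metric.closedBall (a ⟨0, hN⟩) r) ≤ 1 := prob_le_one
    exact ENNReal.ofReal_le_one.mp (h1.trans h2)
  have h1Λ : (0:ℝ) ≤ 1 - Λ := by linarith
  -- The good events
  set G1 : Set Ω := ⋂ j : Fin N, ⋃ i : Fin M, (x i) ⁻¹' (Metric.closedBall (a j) r) with hG1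
  set G2 : Set Ω := ⋂ i : Fin M, (x i) ⁻¹' 𝒳 with hG2
  -- inclusion into the target event
  have hincl : G1 ∩ G2 ⊆
      {ω : Ω | frontier (f '' 𝒳) ⊆ ⋃ i, Metric.closedBall (f (x i ω)) ε} := by
    rintro ω ⟨hω1, hω2⟩
    intro y hy
    obtain ⟨x', hx', rfl⟩ := hbd hy
    obtain ⟨j, hj⟩ := Set.mem_iUnion.mp (hcov hx')
    have hω1j := Set.mem_iInter.mp hω1 j
    obtain ⟨i, hi⟩ := Set.mem_iUnion.mp hω1j
    have hxi𝒳 : x i ω ∈ 𝒳 := Set.mem_iInter.mp hω2 i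
    refine Set.mem_iUnion.mpr ⟨i, ?_⟩
    rw [Metric.mem_closedBall, dist_eq_norm]
    have hd : ‖x' - x i ω‖ ≤ r + r := by
      have h1 : dist x' (a j) ≤ r := hj
      have h2 : dist (x i ω) (a j) ≤ r := hi
      calc ‖x' - x i ω‖ = dist x' (x i ω) := (dist_eq_norm _ _).symm
        _ ≤ dist x' (a j) + dist (a j) (x i ω) := dist_triangle _ _ _
        _ = dist x' (a j) + dist (x i ω) (a j) := by rw [dist_comm (a j)]
        _ ≤ r + r := add_le_add h1 h2
    calc ‖f x' - f (x i ω)‖ ≤ L * ‖x' - x i ω‖ := hf x' (hfr𝒳 hx') (x i ω) hxi𝒳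
      _ ≤ L * (r + r) := by nlinarith
      _ = ε := by rw [hr]; field_simp; ring
  -- measurability of the good event
  have hBmeas : ∀ j : Fin N, MeasurableSet (Metric.closedBall (a j) r) :=
    fun j => measurableSet_closedBall
  have h𝒳meas : MeasurableSet 𝒳 := h𝒳closed.measurableSet
  have hGmeas : MeasurableSet (G1 ∩ G2) := by
    refine MeasurableSet.inter ?_ ?_
    · exact MeasurableSet.iInter fun j => MeasurableSet.iUnion fun i =>
        hxmeas i (hBmeas j)
    · exact MeasurableSet.iInter fun i => hxmeas i h𝒳meas
  -- probability of preimages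
  have hpre : ∀ (i : Fin M) (s : Set (EuclideanSpace ℝ (Fin p))), MeasurableSet s →
      ℙ ((x i) ⁻¹' s) = P𝒳 s := by
    intro i s hs
    rw [← hlaw i, Measure.map_apply (hxmeas i) hs]
  -- ℙ(G2ᶜ) = 0
  have hG2c : ℙ G2ᶜ = 0 := by
    rw [hG2, Set.compl_iInter]
    refine measure_iUnion_null fun i => ?_
    rw [← Set.preimage_compl, hpre i _ h𝒳meas.compl, measure_compl h𝒳meas (by simp),
      hsupp]
    simp
  -- ℙ(G1ᶜ) ≤ N * (1-Λ)^M
  have hG1c : ℙ G1ᶜ ≤ ENNReal.ofReal (N * (1 - Λ) ^ M) := by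
    rw [hG1, Set.compl_iInter]
    calc ℙ (⋃ j : Fin N, (⋃ i : Fin M, (x i) ⁻¹' (Metric.closedBall (a j) r))ᶜ)
        ≤ ∑ j : Fin N, ℙ (⋃ i : Fin M, (x i) ⁻¹' (Metric.closedBall (a j) r))ᶜ :=
          measure_iUnion_fintype_le _ _
      _ ≤ ∑ _j : Fin N, ENNReal.ofReal ((1 - Λ) ^ M) := by
          refine Finset.sum_le_sum fun j _ => ?_
          rw [Set.compl_iUnion]
          have hprod : ℙ (⋂ i : Fin M, ((x i) ⁻¹' (Metric.closedBall (a j) r))ᶜ)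
              = ∏ i : Fin M, ℙ ((x i) ⁻¹' (Metric.closedBall (a j) r))ᶜ := by
            refine hindep.meas_iInter fun i => ?_
            exact ⟨(Metric.closedBall (a j) r)ᶜ, (hBmeas j).compl, rfl⟩
          rw [hprod]
          have hterm : ∀ i : Fin M, ℙ ((x i) ⁻¹' (Metric.closedBall (a j) r))ᶜ
              ≤ ENNReal.ofReal (1 - Λ) := by
            intro i
            rw [← Set.preimage_compl, hpre i _ (hBmeas j).compl,
              measure_compl (hBmeas j) (by simp)]
            rw [measure_univ,
              show ENNReal.ofReal (1 - Λ) = 1 - ENNReal.ofReal Λ by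
                rw [← ENNReal.ofReal_one, ← ENNReal.ofReal_sub _ hΛ.le]]
            exact tsub_le_tsub_left (hball (a j) (ha j)) _
          calc ∏ i : Fin M, ℙ ((x i) ⁻¹' (Metric.closedBall (a j) r))ᶜ
              ≤ ∏ _i : Fin M, ENNReal.ofReal (1 - Λ) :=
                Finset.prod_le_prod' fun i _ => hterm i
            _ = ENNReal.ofReal (1 - Λ) ^ M := by
                rw [Finset.prod_const, Finset.card_univ, Fintype.card_fin]
            _ = ENNReal.ofReal ((1 - Λ) ^ M) := (ENNReal.ofReal_pow h1Λ M).symm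
      _ = ENNReal.ofReal (N * (1 - Λ) ^ M) := by
          rw [Finset.sum_const, Finset.card_univ, Fintype.card_fin, nsmul_eq_mul,
            ENNReal.ofReal_mul (by positivity)]
          simp
  -- combine
  have hGc : ℙ (G1 ∩ G2)ᶜ ≤ ENNReal.ofReal (N * (1 - Λ) ^ M) := by
    rw [Set.compl_inter]
    calc ℙ (G1ᶜ ∪ G2ᶜ) ≤ ℙ G1ᶜ + ℙ G2ᶜ := measure_union_le _ _
      _ = ℙ G1ᶜ := by rw [hG2c, add_zero]
      _ ≤ _ := hG1c
  calc ENNReal.ofReal (1 - N * (1 - Λ) ^ M)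
      = 1 - ENNReal.ofReal (N * (1 - Λ) ^ M) := by
        rw [← ENNReal.ofReal_one, ← ENNReal.ofReal_sub _ (by positivity)]
    _ ≤ 1 - ℙ (G1 ∩ G2)ᶜ := tsub_le_tsub_left hGc _
    _ ≤ ℙ (G1 ∩ G2) := by
        rw [tsub_le_iff_right]
        rw [measure_add_measure_compl hGmeas, measure_univ]
    _ ≤ _ := measure_mono hincl
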